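/- (Poisson summation identity for S_c) For every real c > 1 and every real x, the series S_c(x) = Σ_{m∈ℤ} c^{m+x} exp(−c^{m+x}) converges absolutely and equals (1/log c) · Σ_{m∈ℤ} Γ(1 + 2πim/log c) · exp(−2πimx), where Γ is the Gamma function of a complex variable, log is the natural logarithm, and the series on the right converges absolutely. -/

import Mathlib

open Complex Real Filter MeasureTheory Set Asymptotics
open scoped FourierTransform

lemma gamma_norm_sq (y : ℝ) (hy : y ≠ 0) :
    ‖Complex.Gamma (1 + y * I)‖ ^ 2 = π * y / Real.sinh (π * y) := by
  have hyI : (y : ℂ) * I ≠ 0 := by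
    simp [Complex.ext_iff, hy]
  have hconj : Complex.Gamma (1 - y * I) = (starRingEnd ℂ) (Complex.Gamma (1 + y * I)) := by
    rw [← Complex.Gamma_conj]
    congr 1
    simp [Complex.ext_iff]
  have hrefl := Complex.Gamma_mul_Gamma_one_sub ((y : ℂ) * I)
  have hadd : Complex.Gamma (1 + y * I) = (y : ℂ) * I * Complex.Gamma ((y:ℂ) * I) := by
    rw [add_comm]
    exact Complex.Gamma_add_one _ hyI
  have hsin : Complex.sin (π * ((y:ℂ) * I)) = Real.sinh (π * y) * I := by
    rw [show (π : ℂ) * ((y:ℂ) * I) = ((π * y : ℝ) : ℂ) * I by push_cast; ring,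
      Complex.sin_mul_I, Complex.ofReal_sinh]
  have hs0 : Real.sinh (π * y) ≠ 0 := by
    simp [Real.sinh_eq_zero, Real.pi_ne_zero, hy]
  have key : Complex.Gamma (1 + y * I) * (starRingEnd ℂ) (Complex.Gamma (1 + y * I))
      = ((π * y / Real.sinh (π * y) : ℝ) : ℂ) := by
    rw [← hconj, hadd, mul_assoc, hrefl, hsin]
    have hsc : ((Real.sinh (π * y) : ℝ) : ℂ) ≠ 0 := by exact_mod_cast hs0
    field_simp
    rw [Complex.ofReal_div, mul_div_cancel₀ _ hsc]
    push_cast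
    ring
  have h2 := congrArg Complex.re key
  rw [Complex.mul_conj] at h2
  simp only [Complex.ofReal_re] at h2
  rw [Complex.sq_norm]
  exact h2
lemma gamma_norm_neg (y : ℝ) : ‖Complex.Gamma (1 + (-y) * I)‖ = ‖Complex.Gamma (1 + y * I)‖ := by
  have : (1 : ℂ) + (-y) * I = (starRingEnd ℂ) (1 + y * I) := by simp [Complex.ext_iff]
  rw [this, Complex.Gamma_conj]
  exact RCLike.norm_conj _

lemma gamma_sq_bound (y : ℝ) : ‖Complex.Gamma (1 + y * I)‖ ^ 2 ≤ 4 * π * Real.exp (-|y|) := by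
  have hpi := Real.pi_gt_three
  wlog hy : 0 ≤ y generalizing y with H
  · have hneg := H (-y) (by linarith [le_of_not_ge hy])
    push_cast at hneg
    rw [gamma_norm_neg, abs_neg] at hneg
    exact hneg
  rcases eq_or_lt_of_le hy with h0 | hpos
  · rw [← h0]
    simp [Complex.Gamma_one]
    nlinarith [Real.exp_pos (0:ℝ), Real.exp_zero]
  · rw [gamma_norm_sq y hpos.ne', _root_.abs_of_nonneg hy]
    have hsinh_pos : 0 < Real.sinh (π * y) :=
      lt_trans (by positivity) (Real.self_lt_sinh_iff.mpr (by positivity))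
    rcases le_or_gt y 2 with h2 | h2
    · have h1 : π * y / Real.sinh (π * y) ≤ 1 := by
        rw [div_le_one hsinh_pos]
        exact (Real.self_lt_sinh_iff.mpr (by positivity)).le
      have h5 : Real.exp 2 = Real.exp 1 * Real.exp 1 := by
        rw [← Real.exp_add]; norm_num
      have h3 : Real.exp 2 < 4 * π := by
        rw [h5]; nlinarith [Real.exp_one_lt_d9, Real.exp_pos (1:ℝ)]
      have h6 : (1:ℝ) ≤ 4 * π * Real.exp (-2) := by
        rw [Real.exp_neg, ← div_eq_mul_inv, le_div_iff₀ (Real.exp_pos 2), one_mul]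
        linarith
      have h4 : Real.exp (-2) ≤ Real.exp (-y) := Real.exp_le_exp.mpr (by linarith)
      nlinarith [Real.exp_pos (-y), Real.exp_pos (-2)]
    · have ha : 6 < π * y := by nlinarith
      have h1 : (2:ℝ) ≤ Real.exp (π * y) := by
        nlinarith [Real.add_one_le_exp (π * y)]
      have h2' : Real.exp (-(π * y)) ≤ 1 := by
        calc Real.exp (-(π * y)) ≤ Real.exp 0 := Real.exp_le_exp.mpr (by linarith)
        _ = 1 := Real.exp_zero
      have hsinh_ge : Real.exp (π * y) / 4 ≤ Real.sinh (π * y) := by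
        rw [Real.sinh_eq]
        nlinarith
      have hee : Real.exp (-(π * y)) * Real.exp (π * y) = 1 := by
        rw [← Real.exp_add]; simp
      have hstep : π * y / Real.sinh (π * y) ≤ 4 * π * y * Real.exp (-(π * y)) := by
        rw [div_le_iff₀ hsinh_pos]
        have e4 : Real.exp (π * y) ≤ 4 * Real.sinh (π * y) := by linarith
        nlinarith [mul_le_mul_of_nonneg_left e4 (Real.exp_pos (-(π * y))).le,
          mul_pos Real.pi_pos hpos]
      have hfin : 4 * π * y * Real.exp (-(π * y)) ≤ 4 * π * Real.exp (-y) := by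
        have hyey : y ≤ Real.exp ((π - 1) * y) := by
          have h7 : Real.exp y ≤ Real.exp ((π - 1) * y) := Real.exp_le_exp.mpr (by nlinarith)
          linarith [Real.add_one_le_exp y]
        have h8 : y * Real.exp (-(π * y)) ≤ Real.exp (-y) := by
          have h9 := mul_le_mul_of_nonneg_right hyey (Real.exp_pos (-(π * y))).le
          rw [← Real.exp_add] at h9
          have h10 : (π - 1) * y + -(π * y) = -y := by ring
          rwa [h10] at h9
        nlinarith [Real.pi_pos]
      linarith
lemma gamma_norm_bound (y : ℝ) : ‖Complex.Gamma (1 + y * I)‖ ≤ 4 * Real.exp (-(|y| / 2)) := by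
  have h1 := gamma_sq_bound y
  have h2 : (4 * Real.exp (-(|y| / 2))) ^ 2 = 16 * Real.exp (-|y|) := by
    rw [mul_pow, sq (Real.exp _), ← Real.exp_add]
    ring_nf
  have h3 : ‖Complex.Gamma (1 + y * I)‖ ^ 2 ≤ (4 * Real.exp (-(|y| / 2))) ^ 2 := by
    rw [h2]
    nlinarith [Real.pi_le_four, Real.exp_pos (-|y|)]
  exact (pow_le_pow_iff_left₀ (norm_nonneg _) (by positivity) two_ne_zero).mp h3

lemma summable_exp_decay (a : ℝ) (ha : 0 < a) :
    Summable fun m : ℤ => Real.exp (-(a * |(m : ℝ)|)) := by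
  have key : ∀ s : ℕ → ℤ, (∀ n : ℕ, |((s n : ℤ) : ℝ)| = n) →
      Summable fun n : ℕ => Real.exp (-(a * |((s n : ℤ) : ℝ)|)) := by
    intro s hs
    have : (fun n : ℕ => Real.exp (-(a * |((s n : ℤ) : ℝ)|)))
        = fun n : ℕ => Real.exp (-a) ^ n := by
      funext n
      rw [hs n, ← Real.exp_nat_mul]
      ring_nf
    rw [this]
    exact summable_geometric_of_lt_one (Real.exp_pos _).le
      (Real.exp_lt_one_iff.mpr (by linarith))
  exact Summable.of_nat_of_neg
    (key (fun n => (n : ℤ)) (by intro n; simp))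
    (key (fun n => -(n : ℤ)) (by intro n; simp))
-- lemma C
lemma pointwise_bound {L : ℝ} (hL : 0 < L) (t : ℝ) :
    Real.exp (L * t) * Real.exp (-Real.exp (L * t)) ≤ Real.exp (-(L / 2 * |t|)) := by
  rw [← Real.exp_add]
  apply Real.exp_le_exp.mpr
  rcases le_or_gt t 0 with ht | ht
  · rw [abs_of_nonpos ht]
    nlinarith [Real.exp_pos (L * t), Real.add_one_le_exp (L * t)]
  · rw [abs_of_pos ht]
    have ha : 0 ≤ L * t := by positivity
    have h1 : L * t / 2 + 1 ≤ Real.exp (L * t / 2) := Real.add_one_le_exp _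
    have h2 : Real.exp (L * t / 2) * Real.exp (L * t / 2) = Real.exp (L * t) := by
      rw [← Real.exp_add]; ring_nf
    have h4 := mul_le_mul h1 h1 (by linarith) (Real.exp_pos _).le
    nlinarith [sq_nonneg (L * t - 2)]

-- lemma D
lemma exp_decay_isBigO (a : ℝ) (ha : 0 < a) :
    (fun t : ℝ => Real.exp (-(a * |t|))) =O[cocompact ℝ] (fun t => |t| ^ (-2 : ℝ)) := by
  have hTop : (fun t : ℝ => Real.exp (-(a * |t|))) =O[atTop] (fun t => |t| ^ (-2 : ℝ)) := by
    have htend : Tendsto (fun t : ℝ => t ^ 2 * Real.exp (-(a * t))) atTop (nhds 0) := by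
      have h0 := (tendsto_pow_mul_exp_neg_atTop_nhds_zero 2).const_mul (a⁻¹ ^ 2)
      rw [mul_zero] at h0
      have h2 : Tendsto (fun t : ℝ => a * t) atTop atTop :=
        tendsto_id.const_mul_atTop ha
      refine (h0.comp h2).congr' ?_
      filter_upwards [eventually_gt_atTop 0] with t ht
      show a⁻¹ ^ 2 * ((a * t) ^ 2 * Real.exp (-(a * t))) = t ^ 2 * Real.exp (-(a * t))
      field_simp
    have hbd : ∀ᶠ t : ℝ in atTop, t ^ 2 * Real.exp (-(a * t)) ≤ 1 :=
      htend.eventually (eventually_le_nhds zero_lt_one)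
    rw [isBigO_iff]
    refine ⟨1, ?_⟩
    filter_upwards [hbd, eventually_ge_atTop 1] with t h1t h2t
    have ht0 : (0:ℝ) < t := lt_of_lt_of_le zero_lt_one h2t
    have hrw : |t| ^ (-2:ℝ) = (t ^ 2)⁻¹ := by
      rw [_root_.abs_of_pos ht0, Real.rpow_neg ht0.le,
        show ((2:ℝ)) = ((2:ℕ):ℝ) by norm_num, Real.rpow_natCast]
    rw [Real.norm_eq_abs, Real.norm_eq_abs, one_mul, _root_.abs_of_pos (Real.exp_pos _),
      _root_.abs_of_pos (Real.rpow_pos_of_pos (abs_pos.mpr ht0.ne') _), hrw,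
      _root_.abs_of_pos ht0]
    calc Real.exp (-(a * t)) = t ^ 2 * Real.exp (-(a * t)) / t ^ 2 := by field_simp
      _ ≤ 1 / t ^ 2 := by gcongr
      _ = (t ^ 2)⁻¹ := one_div _
  have hBot : (fun t : ℝ => Real.exp (-(a * |t|))) =O[atBot] (fun t => |t| ^ (-2 : ℝ)) := by
    have h1 := hTop.comp_tendsto tendsto_neg_atBot_atTop
    simpa [Function.comp_def, abs_neg] using h1
  rw [cocompact_eq_atBot_atTop, isBigO_sup]
  exact ⟨hBot, hTop⟩
noncomputable def hfun : ℝ → ℂ :=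
  fun u => ((Real.exp (-u) * Real.exp (-Real.exp (-u)) : ℝ) : ℂ)

lemma mellin_gamma (s : ℂ) (hs : 0 < (s + 1).re) :
    mellin (fun y : ℝ => (y : ℂ) * Complex.exp (-(y : ℂ))) s = Complex.Gamma (s + 1) := by
  rw [Complex.Gamma_eq_integral hs, Complex.GammaIntegral, mellin]
  refine setIntegral_congr_fun measurableSet_Ioi (fun t ht => ?_)
  have ht0 : (t : ℂ) ≠ 0 := by
    simp only [ne_eq, Complex.ofReal_eq_zero]
    exact (mem_Ioi.mp ht).ne'
  rw [smul_eq_mul, Complex.ofReal_exp]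
  rw [show ((t:ℂ)) ^ (s - 1) * ((t:ℂ) * Complex.exp (-(t:ℂ)))
      = ((t:ℂ) ^ (s - 1) * (t:ℂ) ^ (1:ℂ)) * Complex.exp (-(t:ℂ)) by rw [Complex.cpow_one]; ring]
  rw [← Complex.cpow_add _ _ ht0]
  rw [show s - 1 + 1 = s + 1 - 1 by ring]
  push_cast
  ring

lemma fourier_hfun (v : ℝ) : 𝓕 hfun v = Complex.Gamma (1 + (2 * π * v : ℝ) * I) := by
  have key := mellin_eq_fourier (E := ℂ)
    (fun y : ℝ => (y : ℂ) * Complex.exp (-(y : ℂ))) (s := ((2 * π * v : ℝ) : ℂ) * I)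
  rw [mellin_gamma _ (by simp)] at key
  have h1 : (((2 * π * v : ℝ) : ℂ) * I).re = 0 := by simp
  have h2 : (((2 * π * v : ℝ) : ℂ) * I).im = 2 * π * v := by simp
  rw [h1, h2] at key
  have h3 : 2 * π * v / (2 * π) = v := by
    field_simp
  rw [h3] at key
  have h4 : (fun u : ℝ => Real.exp (-0 * u) • ((Real.exp (-u) : ℂ) * Complex.exp (-(Real.exp (-u) : ℂ))))
      = hfun := by
    funext u
    simp only [neg_zero, zero_mul, Real.exp_zero, one_smul, hfun]
    push_cast
    ring
  rw [h4] at key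
  rw [← key, add_comm]
lemma fourier_scaled (L : ℝ) (hL : 0 < L) (ξ : ℝ) :
    𝓕 (fun t : ℝ => hfun (-(L * t))) ξ
      = (1 / (L:ℂ)) * Complex.Gamma (1 - 2 * (π:ℂ) * I * (ξ:ℂ) / (L:ℂ)) := by
  have hL0 : L ≠ 0 := hL.ne'
  set G : ℝ → ℂ := fun u => Complex.exp (((-2 * π * (-(u / L)) * ξ : ℝ) : ℂ) * I) • hfun u with hG
  have step1 : 𝓕 (fun t : ℝ => hfun (-(L * t))) ξ = ∫ v : ℝ, G (-L * v) := by
    rw [Real.fourier_real_eq_integral_exp_smul]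
    congr 1
    funext v
    simp only [hG]
    congr 3
    · congr 1
      field_simp
    · ring
  have step2 : (∫ v : ℝ, G (-L * v)) = |(-L)⁻¹| • ∫ u : ℝ, G u :=
    MeasureTheory.Measure.integral_comp_mul_left G (-L)
  have step3 : (∫ u : ℝ, G u) = 𝓕 hfun (-(ξ / L)) := by
    rw [Real.fourier_real_eq_integral_exp_smul]
    congr 1
    funext u
    simp only [hG]
    congr 3
    ring
  rw [step1, step2, step3, fourier_hfun]
  have habs : |(-L)⁻¹| = 1 / L := by
    rw [abs_inv, abs_neg, abs_of_pos hL, one_div]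
  rw [habs, Complex.real_smul]
  congr 1
  · push_cast; ring
  · congr 1
    push_cast
    field_simp
    ring

/-- `S_c(x) = Σ_{m ∈ ℤ} c^{m+x} exp(-c^{m+x})`, a period-one function of `x`. -/
noncomputable def Sfun (c x : ℝ) : ℝ :=
  ∑' m : ℤ, c ^ ((m : ℝ) + x) * Real.exp (-(c ^ ((m : ℝ) + x)))

/-- Poisson summation identity for `S_c`: the series defining `S_c(x)` converges absolutely
and `S_c(x) = (1/log c) Σ_{m ∈ ℤ} Γ(1 + 2πim/log c) exp(-2πimx)`, the right-hand series
converging absolutely. -/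
theorem S_function_poisson_summation (c : ℝ) (hc : 1 < c) (x : ℝ) :
    (Summable fun m : ℤ => |c ^ ((m : ℝ) + x) * Real.exp (-(c ^ ((m : ℝ) + x)))|) ∧
    (Summable fun m : ℤ =>
      ‖Complex.Gamma (1 + 2 * (Real.pi : ℂ) * Complex.I * (m : ℂ) / (Real.log c : ℂ)) *
        Complex.exp (-(2 * (Real.pi : ℂ) * Complex.I * (m : ℂ) * (x : ℂ)))‖) ∧
    ((Sfun c x : ℂ) = (1 / (Real.log c : ℂ)) *
      ∑' m : ℤ,
        Complex.Gamma (1 + 2 * (Real.pi : ℂ) * Complex.I * (m : ℂ) / (Real.log c : ℂ)) *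
          Complex.exp (-(2 * (Real.pi : ℂ) * Complex.I * (m : ℂ) * (x : ℂ)))) := by
  have hc0 : 0 < c := lt_trans one_pos hc
  set L := Real.log c with hLdef
  have hL : 0 < L := Real.log_pos hc
  have hrpow : ∀ t : ℝ, c ^ t = Real.exp (L * t) := fun t => Real.rpow_def_of_pos hc0 t
  -- conjunct 1
  have habs_term : ∀ m : ℤ, |c ^ ((m : ℝ) + x) * Real.exp (-(c ^ ((m : ℝ) + x)))|
      = c ^ ((m : ℝ) + x) * Real.exp (-(c ^ ((m : ℝ) + x))) := by
    intro m
    apply _root_.abs_of_nonneg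
    positivity
  have htri : ∀ m : ℤ, |(m : ℝ)| - |x| ≤ |(m : ℝ) + x| := by
    intro m
    have := abs_add_le ((m : ℝ) + x) (-x)
    simp only [add_neg_cancel_right, abs_neg] at this
    linarith
  have hbound1 : ∀ m : ℤ, c ^ ((m : ℝ) + x) * Real.exp (-(c ^ ((m : ℝ) + x)))
      ≤ Real.exp (L / 2 * |x|) * Real.exp (-(L / 2 * |(m : ℝ)|)) := by
    intro m
    calc c ^ ((m : ℝ) + x) * Real.exp (-(c ^ ((m : ℝ) + x)))
        ≤ Real.exp (-(L / 2 * |(m : ℝ) + x|)) := by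
          rw [hrpow]
          exact pointwise_bound hL _
      _ ≤ Real.exp (L / 2 * |x|) * Real.exp (-(L / 2 * |(m : ℝ)|)) := by
          rw [← Real.exp_add]
          apply Real.exp_le_exp.mpr
          have := htri m
          nlinarith [abs_nonneg ((m:ℝ) + x)]
  have hsum1 : Summable fun m : ℤ => |c ^ ((m : ℝ) + x) * Real.exp (-(c ^ ((m : ℝ) + x)))| := by
    apply Summable.of_nonneg_of_le (fun m => abs_nonneg _)
      (fun m => (habs_term m).le.trans (hbound1 m))
    exact (summable_exp_decay (L / 2) (by positivity)).mul_left _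
  refine ⟨hsum1, ?_, ?_⟩
  -- conjunct 2
  · have hterm : ∀ m : ℤ,
        ‖Complex.Gamma (1 + 2 * (π : ℂ) * I * (m : ℂ) / (L : ℂ)) *
          Complex.exp (-(2 * (π : ℂ) * I * (m : ℂ) * (x : ℂ)))‖
        = ‖Complex.Gamma (1 + ((2 * π * m / L : ℝ) : ℂ) * I)‖ := by
      intro m
      rw [norm_mul]
      have h1 : ‖Complex.exp (-(2 * (π : ℂ) * I * (m : ℂ) * (x : ℂ)))‖ = 1 := by
        rw [Complex.norm_exp]
        have : (-(2 * (π : ℂ) * I * (m : ℂ) * (x : ℂ))).re = 0 := by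
          simp [Complex.ext_iff]
        rw [this, Real.exp_zero]
      rw [h1, mul_one]
      congr 2
      push_cast
      ring
    have hbound2 : ∀ m : ℤ,
        ‖Complex.Gamma (1 + ((2 * π * m / L : ℝ) : ℂ) * I)‖
        ≤ 4 * Real.exp (-(π / L * |(m : ℝ)|)) := by
      intro m
      refine (gamma_norm_bound _).trans_eq ?_
      congr 2
      rw [abs_div, abs_mul, abs_mul, abs_of_pos Real.pi_pos, abs_of_pos hL]
      norm_num
      ring
    apply Summable.of_nonneg_of_le (fun m => norm_nonneg _)
      (fun m => (hterm m).le.trans (hbound2 m))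
    exact (summable_exp_decay (π / L) (by positivity)).mul_left 4
  · set f : ℝ → ℂ := fun t => hfun (-(L * t)) with hfdef
    have hfeq : ∀ t : ℝ, f t = ((c ^ t * Real.exp (-(c ^ t)) : ℝ) : ℂ) := by
      intro t
      simp only [hfdef, hfun, neg_neg]
      rw [hrpow]
    have hcont : Continuous f := by
      have h1 : Continuous hfun := by
        unfold hfun
        fun_prop
      fun_prop
    have hf_decay : f =O[cocompact ℝ] (fun t : ℝ => |t| ^ (-2:ℝ)) := by
      refine IsBigO.trans ?_ (exp_decay_isBigO (L/2) (by positivity))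
      apply isBigO_of_le
      intro t
      rw [hfeq t, Complex.norm_real, Real.norm_eq_abs, Real.norm_eq_abs,
        _root_.abs_of_pos (Real.exp_pos _), _root_.abs_of_nonneg (by positivity :
          (0:ℝ) ≤ c ^ t * Real.exp (-(c ^ t))), hrpow]
      exact pointwise_bound hL t
    have hFf_decay : (𝓕 f) =O[cocompact ℝ] (fun t : ℝ => |t| ^ (-2:ℝ)) := by
      refine IsBigO.trans ?_ (exp_decay_isBigO (π/L) (by positivity))
      rw [isBigO_iff]
      refine ⟨4 / L, Eventually.of_forall fun ξ => ?_⟩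
      rw [hfdef, fourier_scaled L hL ξ]
      have harg : (1 : ℂ) - 2 * π * I * ξ / L = 1 + ((-(2 * π * ξ / L) : ℝ) : ℂ) * I := by
        push_cast; ring
      rw [norm_mul, harg]
      have h2 := gamma_norm_bound (-(2 * π * ξ / L))
      have h3 : |(-(2 * π * ξ / L))| / 2 = π / L * |ξ| := by
        rw [abs_neg, abs_div, abs_mul, abs_mul, _root_.abs_of_pos Real.pi_pos,
          _root_.abs_of_pos hL]
        norm_num
        ring
      rw [h3] at h2
      have h4 : ‖(1 / (L:ℂ))‖ = 1 / L := by
        rw [norm_div, norm_one, Complex.norm_real, Real.norm_eq_abs, _root_.abs_of_pos hL]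
      rw [h4, Real.norm_eq_abs, _root_.abs_of_pos (Real.exp_pos _)]
      have h5 : 0 < L := hL
      calc 1 / L * ‖Complex.Gamma (1 + ((-(2 * π * ξ / L) : ℝ) : ℂ) * I)‖
          ≤ 1 / L * (4 * Real.exp (-(π / L * |ξ|))) := by
            apply mul_le_mul_of_nonneg_left h2 (by positivity)
        _ = 4 / L * Real.exp (-(π / L * |ξ|)) := by ring
    have hPo := Real.tsum_eq_tsum_fourier_of_rpow_decay hcont one_lt_two
      hf_decay hFf_decay x
    have hLHS : ((Sfun c x : ℝ) : ℂ) = ∑' m : ℤ, f (x + (m : ℝ)) := by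
      rw [Sfun, Complex.ofReal_tsum]
      congr 1
      funext m
      rw [hfeq (x + (m:ℝ)), add_comm x ((m:ℝ))]
    have hRHS : (∑' n : ℤ, 𝓕 f (n : ℝ) * fourier n (x : UnitAddCircle))
        = (1 / (L:ℂ)) * ∑' m : ℤ,
            Complex.Gamma (1 + 2 * (π:ℂ) * I * (m:ℂ) / (L:ℂ)) *
              Complex.exp (-(2 * (π:ℂ) * I * (m:ℂ) * (x:ℂ))) := by
      rw [← tsum_mul_left]
      rw [← (Equiv.neg ℤ).tsum_eq (fun n : ℤ => 𝓕 f (n : ℝ) * fourier n (x : UnitAddCircle))]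
      apply tsum_congr
      intro m
      simp only [Equiv.neg_apply]
      rw [hfdef, fourier_scaled L hL _, fourier_coe_apply]
      push_cast
      rw [mul_assoc]
      congr 2
      · congr 1
        field_simp
        ring
      · congr 1
        field_simp
    calc ((Sfun c x : ℝ) : ℂ) = ∑' m : ℤ, f (x + (m : ℝ)) := hLHS
      _ = ∑' n : ℤ, 𝓕 f (n : ℝ) * fourier n (x : UnitAddCircle) := hPo
      _ = _ := hRHS
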